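/- Let a, b, n be natural numbers with a ≥ 2, b ≥ 2 and a + b ≤ n − 1. Then r(n,a,b) > p(n,a)·p(n,b), where r(n,a,b) := (4·a!·b!·(n−a−b)!/(n−1)!)·G(n,a,b) and G(n,a,b) := n/(a·b·(a+1)·(b+1)) − (a(a+1)+b(b+1)+ab)/(a·b·(a+1)·(b+1)·(a+b+1)) + 1/((a+b)·((a+b)²−1)). (This shows that under the Yule–Harding–Kingman model the events that two disjoint non-exhaustive sets A and B, each of size at least 2, are clades are positively correlated.) -/

import Mathlib

open Nat

/-- `p n a` : probability that a fixed `a`-element subset of an `n`-set is a clade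
of a YHK tree (for `1 ≤ a ≤ n - 1`). -/
noncomputable def p (n a : ℕ) : ℝ :=
  (2 * (n : ℝ) / ((a : ℝ) * ((a : ℝ) + 1))) * ((n.choose a : ℝ))⁻¹

/-- The quantity `G_n(a,b)` from Theorem 5 (Case 5). -/
noncomputable def G (n a b : ℕ) : ℝ :=
  (n : ℝ) / ((a : ℝ) * (b : ℝ) * ((a : ℝ) + 1) * ((b : ℝ) + 1)) -
    ((a : ℝ) * ((a : ℝ) + 1) + (b : ℝ) * ((b : ℝ) + 1) + (a : ℝ) * (b : ℝ)) /
      ((a : ℝ) * (b : ℝ) * ((a : ℝ) + 1) * ((b : ℝ) + 1) * ((a : ℝ) + (b : ℝ) + 1)) +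
    1 / (((a : ℝ) + (b : ℝ)) * (((a : ℝ) + (b : ℝ)) ^ 2 - 1))

/-- `r n a b` : joint probability that two fixed disjoint, non-exhaustive subsets of
sizes `a` and `b` are both clades under the YHK model. -/
noncomputable def r (n a b : ℕ) : ℝ :=
  (4 * (a ! : ℝ) * (b ! : ℝ) * ((n - a - b)! : ℝ) / ((n - 1)! : ℝ)) * G n a b

lemma asc_fact_le (k : ℕ) : ∀ i j : ℕ, i ≤ j → (i + k)! * j ! ≤ (j + k)! * i ! := by
  induction k with
  | zero => intro i j _; simp [Nat.mul_comm]
  | succ k ih =>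
    intro i j hij
    calc (i + (k+1))! * j ! = (i + k + 1) * ((i + k)! * j !) := by
          rw [show i + (k+1) = (i + k) + 1 from rfl, Nat.factorial_succ]; ring
      _ ≤ (j + k + 1) * ((j + k)! * i !) := Nat.mul_le_mul (by omega) (ih i j hij)
      _ = (j + (k+1))! * i ! := by
          rw [show j + (k+1) = (j + k) + 1 from rfl, Nat.factorial_succ]; ring

lemma fact_ineq (a b n : ℕ) (hb : 2 ≤ b) (hba : b ≤ a) (hn : a + b + 1 ≤ n) :
    (n-a)! * (n-b)! * (n * (n-1)) ≤ n ! * (n-a-b)! * ((n-a) * (n-a-1)) := by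
  obtain ⟨m, k, h4, h6, h1, h5, h3, h2⟩ :
      ∃ m k, n - a - 1 = m + 1 ∧ n - a - b = k ∧ n - a = m + 2 ∧ n - b = k + a ∧
        n - 1 = m + a + 1 ∧ n = m + a + 2 :=
    ⟨n - a - 2, n - a - b, by omega, by omega, by omega, by omega, by omega, by omega⟩
  rw [h4, h6, h1, h5, h3, h2]
  have key : (k + a)! * m ! ≤ (m + a)! * k ! := asc_fact_le a k m (by omega)
  calc (m+2)! * (k+a)! * ((m+a+2) * (m+a+1))
      = ((m+2)*(m+1)*(m+a+2)*(m+a+1)) * ((k+a)! * m !) := by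
        rw [show (m+2)! = (m+2)*((m+1)* m !) from rfl]; ring
    _ ≤ ((m+2)*(m+1)*(m+a+2)*(m+a+1)) * ((m+a)! * k !) := Nat.mul_le_mul_left _ key
    _ = (m+a+2)! * k ! * ((m+2)*(m+1)) := by
        rw [show (m+a+2)! = (m+a+2)*((m+a+1)*(m+a)!) from rfl]; ring

lemma pdiff_pos (A B : ℝ) (hB : 2 ≤ B) (hBA : B ≤ A) :
    (A*(A+1) + B*(B+1) + A*B) * ((A+B) * (A+B-1)) <
      A*(A+2*B+1)*((A+B+1)*(A+B-1)) + A*B*(A+1)*(B+1) := by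
  have hs : (0:ℝ) ≤ A - B := by linarith
  have ht : (0:ℝ) ≤ B - 2 := by linarith
  have e : A*(A+2*B+1)*((A+B+1)*(A+B-1)) + A*B*(A+1)*(B+1)
      - (A*(A+1) + B*(B+1) + A*B) * ((A+B) * (A+B-1))
      = 54 + 87*(B-2) + 50*(B-2)^2 + 12*(B-2)^3 + (B-2)^4 + 81*(A-B)
        + 105*((A-B)*(B-2)) + 44*((A-B)*(B-2)^2) + 6*((A-B)*(B-2)^3)
        + 30*(A-B)^2 + 25*((A-B)^2*(B-2)) + 5*((A-B)^2*(B-2)^2)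
        + 3*(A-B)^3 + (A-B)^3*(B-2) := by ring
  nlinarith [pow_nonneg ht 2, pow_nonneg ht 3, pow_nonneg ht 4,
    mul_nonneg hs ht, mul_nonneg hs (pow_nonneg ht 2), mul_nonneg hs (pow_nonneg ht 3),
    pow_nonneg hs 2, mul_nonneg (pow_nonneg hs 2) ht, mul_nonneg (pow_nonneg hs 2) (pow_nonneg ht 2),
    pow_nonneg hs 3, mul_nonneg (pow_nonneg hs 3) ht, e]

lemma real_key (A B N Q : ℝ) (hB : 2 ≤ B) (hBA : B ≤ A) (hN : A + B + 1 ≤ N)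
    (hQ : Q * (N * (N - 1)) ≤ (N - A) * (N - A - 1)) :
    N / (A * B * (A + 1) * (B + 1)) * Q <
      N / (A * B * (A + 1) * (B + 1)) -
        (A * (A + 1) + B * (B + 1) + A * B) / (A * B * (A + 1) * (B + 1) * (A + B + 1)) +
        1 / ((A + B) * ((A + B) ^ 2 - 1)) := by
  have hA : 2 ≤ A := hB.trans hBA
  have hA0 : (0:ℝ) < A := by linarith
  have hB0 : (0:ℝ) < B := by linarith
  have hA1 : (0:ℝ) < A + 1 := by linarith
  have hB1 : (0:ℝ) < B + 1 := by linarith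
  have hN0 : (0:ℝ) < N := by linarith
  have hN1 : (0:ℝ) < N - 1 := by linarith
  have hABm : (0:ℝ) < A + B - 1 := by linarith
  have hABp : (0:ℝ) < A + B := by linarith
  have hAB1 : (0:ℝ) < A + B + 1 := by linarith
  have hSq : (0:ℝ) < (A + B) ^ 2 - 1 := by nlinarith
  have hD1 : (0:ℝ) < A * B * (A + 1) * (B + 1) := by positivity
  have step1 : Q ≤ (N - A) * (N - A - 1) / (N * (N - 1)) :=
    (le_div_iff₀ (mul_pos hN0 hN1)).2 hQ
  have step2 : N / (A * B * (A + 1) * (B + 1)) * Q ≤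
      N / (A * B * (A + 1) * (B + 1)) * ((N - A) * (N - A - 1) / (N * (N - 1))) :=
    mul_le_mul_of_nonneg_left step1 (by positivity)
  have step3 : N / (A * B * (A + 1) * (B + 1)) * ((N - A) * (N - A - 1) / (N * (N - 1)))
      = (N - A) * (N - A - 1) / (A * B * (A + 1) * (B + 1) * (N - 1)) := by
    field_simp
  have step4 : (N - A) * (N - A - 1) / (A * B * (A + 1) * (B + 1) * (N - 1)) <
      N / (A * B * (A + 1) * (B + 1)) -
        (A * (A + 1) + B * (B + 1) + A * B) / (A * B * (A + 1) * (B + 1) * (A + B + 1)) +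
        1 / ((A + B) * ((A + B) ^ 2 - 1)) := by
    rw [← sub_pos]
    have heq : N / (A * B * (A + 1) * (B + 1)) -
        (A * (A + 1) + B * (B + 1) + A * B) / (A * B * (A + 1) * (B + 1) * (A + B + 1)) +
        1 / ((A + B) * ((A + B) ^ 2 - 1)) -
        (N - A) * (N - A - 1) / (A * B * (A + 1) * (B + 1) * (N - 1))
        = (A*(2*N-A-1)*((A+B)*(A+B+1)*(A+B-1))
            - (A*(A+1)+B*(B+1)+A*B)*(N-1)*((A+B)*(A+B-1))
            + A*B*(A+1)*(B+1)*(N-1))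
          / (A*B*(A+1)*(B+1)*(N-1)*((A+B)*(A+B+1)*(A+B-1))) := by
      rw [show (A + B) ^ 2 - 1 = (A+B+1)*(A+B-1) by ring]
      field_simp
      ring
    rw [heq]
    apply _root_.div_pos _ (by positivity)
    have hPd := pdiff_pos A B hB hBA
    have hc1 : (0:ℝ) ≤ (A+B)*(A+B-1)*(A-B)*(A+B+1) + A*B*(A+1)*(B+1) + A*B*(A+B)*(A+B-1) := by
      have : (0:ℝ) ≤ A - B := by linarith
      positivity
    have hNge : (0:ℝ) ≤ N - (A+B+1) := by linarith
    have eN : A*(2*N-A-1)*((A+B)*(A+B+1)*(A+B-1))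
            - (A*(A+1)+B*(B+1)+A*B)*(N-1)*((A+B)*(A+B-1))
            + A*B*(A+1)*(B+1)*(N-1)
        = ((A+B)*(A+B-1)*(A-B)*(A+B+1) + A*B*(A+1)*(B+1) + A*B*(A+B)*(A+B-1)) * (N-(A+B+1))
          + (A+B) * (A*(A+2*B+1)*((A+B+1)*(A+B-1)) + A*B*(A+1)*(B+1)
              - (A*(A+1) + B*(B+1) + A*B) * ((A+B) * (A+B-1))) := by ring
    nlinarith [mul_nonneg hc1 hNge, mul_pos hABp (by linarith : (0:ℝ) <
      A*(A+2*B+1)*((A+B+1)*(A+B-1)) + A*B*(A+1)*(B+1)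
        - (A*(A+1) + B*(B+1) + A*B) * ((A+B) * (A+B-1)))]
  calc N / (A * B * (A + 1) * (B + 1)) * Q
      ≤ (N - A) * (N - A - 1) / (A * B * (A + 1) * (B + 1) * (N - 1)) := step2.trans_eq step3
    _ < _ := step4

set_option maxHeartbeats 1000000 in
lemma main_aux (a b n : ℕ) (hb : 2 ≤ b) (hba : b ≤ a) (hn : a + b + 1 ≤ n) :
    r n a b > p n a * p n b := by
  have ha : 2 ≤ a := hb.trans hba
  have han : a ≤ n := by omega
  have hbn : b ≤ n := by omega
  set A : ℝ := (a : ℝ) with hAdef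
  set B : ℝ := (b : ℝ) with hBdef
  set N : ℝ := (n : ℝ) with hNdef
  have hA2 : (2:ℝ) ≤ A := by rw [hAdef]; exact_mod_cast ha
  have hB2 : (2:ℝ) ≤ B := by rw [hBdef]; exact_mod_cast hb
  have hBA : B ≤ A := by rw [hAdef, hBdef]; exact_mod_cast hba
  have hN' : A + B + 1 ≤ N := by rw [hAdef, hBdef, hNdef]; exact_mod_cast hn
  have hA0 : (0:ℝ) < A := by linarith
  have hB0 : (0:ℝ) < B := by linarith
  have hfn : (0:ℝ) < (n ! : ℝ) := by exact_mod_cast n.factorial_pos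
  have hfa : (0:ℝ) < (a ! : ℝ) := by exact_mod_cast a.factorial_pos
  have hfb : (0:ℝ) < (b ! : ℝ) := by exact_mod_cast b.factorial_pos
  have hfna : (0:ℝ) < ((n-a)! : ℝ) := by exact_mod_cast (n-a).factorial_pos
  have hfnb : (0:ℝ) < ((n-b)! : ℝ) := by exact_mod_cast (n-b).factorial_pos
  have hfnab : (0:ℝ) < ((n-a-b)! : ℝ) := by exact_mod_cast (n-a-b).factorial_pos
  have hfn1 : (0:ℝ) < ((n-1)! : ℝ) := by exact_mod_cast (n-1).factorial_pos
  -- cast subtraction facts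
  have hs1 : ((n - a : ℕ) : ℝ) = N - A := by
    rw [Nat.cast_sub han]
  have hs2 : ((n - a - 1 : ℕ) : ℝ) = N - A - 1 := by
    rw [show n - a - 1 = n - (a + 1) by omega, Nat.cast_sub (by omega)]
    push_cast; ring
  have hs3 : ((n - 1 : ℕ) : ℝ) = N - 1 := by
    rw [Nat.cast_sub (by omega)]; norm_num; rfl
  -- choose inverses
  have hca : ((n.choose a : ℝ)) * ((a ! : ℝ) * ((n-a)! : ℝ)) = (n ! : ℝ) := by
    exact_mod_cast congrArg (Nat.cast (R := ℝ))
      (by rw [← Nat.choose_mul_factorial_mul_factorial han]; ring)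
  have hcb : ((n.choose b : ℝ)) * ((b ! : ℝ) * ((n-b)! : ℝ)) = (n ! : ℝ) := by
    exact_mod_cast congrArg (Nat.cast (R := ℝ))
      (by rw [← Nat.choose_mul_factorial_mul_factorial hbn]; ring)
  have hcha : (0:ℝ) < (n.choose a : ℝ) := by exact_mod_cast Nat.choose_pos han
  have hchb : (0:ℝ) < (n.choose b : ℝ) := by exact_mod_cast Nat.choose_pos hbn
  have hia : ((n.choose a : ℝ))⁻¹ = ((a ! : ℝ) * ((n-a)! : ℝ)) / (n ! : ℝ) := by
    rw [eq_div_iff hfn.ne', inv_mul_eq_div, div_eq_iff hcha.ne']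
    linarith [hca]
  have hib : ((n.choose b : ℝ))⁻¹ = ((b ! : ℝ) * ((n-b)! : ℝ)) / (n ! : ℝ) := by
    rw [eq_div_iff hfn.ne', inv_mul_eq_div, div_eq_iff hchb.ne']
    linarith [hcb]
  set Q : ℝ := ((n-a)! : ℝ) * ((n-b)! : ℝ) / ((n ! : ℝ) * ((n-a-b)! : ℝ)) with hQdef
  have hQ : Q * (N * (N - 1)) ≤ (N - A) * (N - A - 1) := by
    have hni := fact_ineq a b n hb hba hn
    have hcast : (((n-a)! * (n-b)! * (n * (n-1)) : ℕ) : ℝ) ≤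
        ((n ! * (n-a-b)! * ((n-a) * (n-a-1)) : ℕ) : ℝ) := Nat.cast_le.2 hni
    push_cast at hcast
    rw [hs1, hs2, hs3] at hcast
    rw [hQdef, div_mul_eq_mul_div, div_le_iff₀ (by positivity)]
    nlinarith [hcast]
  have hkey := real_key A B N Q hB2 hBA hN' hQ
  have hGeq : N / (A * B * (A + 1) * (B + 1)) -
        (A * (A + 1) + B * (B + 1) + A * B) / (A * B * (A + 1) * (B + 1) * (A + B + 1)) +
        1 / ((A + B) * ((A + B) ^ 2 - 1)) = G n a b := by
    rw [G]
  rw [hGeq] at hkey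
  have hCpos : (0:ℝ) < 4 * (a ! : ℝ) * (b ! : ℝ) * ((n - a - b)! : ℝ) / ((n - 1)! : ℝ) := by
    positivity
  have hfacn : (n ! : ℝ) = N * ((n-1)! : ℝ) := by
    rw [hNdef]
    exact_mod_cast (Nat.mul_factorial_pred (by omega : n ≠ 0)).symm
  have hpp : p n a * p n b =
      (4 * (a ! : ℝ) * (b ! : ℝ) * ((n - a - b)! : ℝ) / ((n - 1)! : ℝ)) *
        (N / (A * B * (A + 1) * (B + 1)) * Q) := by
    rw [p, p, hia, hib, hQdef, hfacn]
    have hA1 : A + 1 ≠ 0 := by rw [hAdef]; positivity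
    have hB1 : B + 1 ≠ 0 := by rw [hBdef]; positivity
    have hN0 : N ≠ 0 := by rw [hNdef]; exact Nat.cast_ne_zero.2 (by omega)
    field_simp [hfa.ne', hfb.ne', hfna.ne', hfnb.ne', hfnab.ne', hfn1.ne',
      hA0.ne', hB0.ne', hA1, hB1, hN0]
    ring
  rw [r, hpp]
  exact mul_lt_mul_of_pos_left hkey hCpos

/-- Under the YHK model, the events that two disjoint non-exhaustive sets `A` and
`B`, each of size at least 2, are clades are positively correlated. -/
theorem disjoint_clades_positive_correlation (a b n : ℕ) (ha : 2 ≤ a) (hb : 2 ≤ b)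
    (hab : a + b ≤ n - 1) :
    r n a b > p n a * p n b := by
  rcases le_total b a with h | h
  · exact main_aux a b n hb h (by omega)
  · have hm := main_aux b a n ha h (by omega)
    have hr : r n a b = r n b a := by
      rw [r, r, G, G, show n - a - b = n - b - a from by omega]
      ring
    rw [hr, mul_comm]
    exact hm
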